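/- Let G be a finite simple graph on a vertex type V, let d ≥ 1, let S be a realization of G in dimension d, and let w : V → ℝ be nonnegative weights. For each natural number k ≥ 1 define β(G,w,k) := sup over density matrices ρ (positive semidefinite complex d×d matrices of trace 1) of ∑_i w i * |tr(ρ * S i)|^k (each tr(ρ * S i) is real). Then as k → ∞ the values β(G,w,k) converge to the weighted independence number: lim_{k→∞} β(G,w,k) = α(G,w). -/

import Mathlib

open Matrix
open scoped ComplexOrder

/-- A realization of the graph `G` in dimension `d`: a family of Hermitian involutions that
anticommute on edges and commute on non-edges. -/
def IsRealization {V : Type*} (G : SimpleGraph V) (d : ℕ)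
    (S : V → Matrix (Fin d) (Fin d) ℂ) : Prop :=
  (∀ i, (S i).IsHermitian) ∧ (∀ i, S i * S i = 1) ∧
    (∀ i j, G.Adj i j → S i * S j = -(S j * S i)) ∧
    (∀ i j, i ≠ j → ¬G.Adj i j → S i * S j = S j * S i)

/-- The (real) expectation value `ψᴴ A ψ` of a matrix `A` at a vector `ψ`. -/
noncomputable def expectation {d : ℕ} (A : Matrix (Fin d) (Fin d) ℂ) (ψ : Fin d → ℂ) : ℝ :=
  (star ψ ⬝ᵥ (A *ᵥ ψ)).re

/-- The beta value of a realization: supremum over unit vectors of the weighted sum of squared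
expectations. -/
noncomputable def betaVal {V : Type*} [Fintype V] {d : ℕ}
    (S : V → Matrix (Fin d) (Fin d) ℂ) (w : V → ℝ) : ℝ :=
  sSup {r : ℝ | ∃ ψ : Fin d → ℂ, star ψ ⬝ᵥ ψ = 1 ∧
    r = ∑ i, w i * (expectation (S i) ψ) ^ 2}

/-- A finite set of vertices is independent if no two of its members are adjacent. -/
def IsIndepSet {V : Type*} (G : SimpleGraph V) (I : Finset V) : Prop :=
  ∀ a ∈ I, ∀ b ∈ I, ¬G.Adj a b

/-- The weighted independence number. -/
noncomputable def alphaW {V : Type*} [Fintype V] (G : SimpleGraph V) (w : V → ℝ) : ℝ :=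
  sSup {r : ℝ | ∃ I : Finset V, IsIndepSet G I ∧ r = ∑ i ∈ I, w i}

/-- A graph is ħ-perfect if for every realization and every nonnegative weight vector the beta
value equals the weighted independence number. -/
def HbarPerfect {V : Type*} [Fintype V] (G : SimpleGraph V) : Prop :=
  ∀ d : ℕ, 1 ≤ d → ∀ S : V → Matrix (Fin d) (Fin d) ℂ, IsRealization G d S →
    ∀ w : V → ℝ, (∀ i, 0 ≤ w i) → betaVal S w = alphaW G w

namespace Stmt13Aux
variable {d : ℕ}

lemma psd_trace_nonneg {A : Matrix (Fin d) (Fin d) ℂ} (hA : A.PosSemidef) :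
    0 ≤ A.trace := by
  rw [Matrix.trace]
  apply Finset.sum_nonneg
  intro i _
  have h := hA.dotProduct_mulVec_nonneg (Pi.single i 1)
  simpa [dotProduct, Matrix.mulVec, Pi.single_apply, apply_ite,
    Finset.sum_ite_eq'] using h

lemma trace_mul_psd_nonneg {A B : Matrix (Fin d) (Fin d) ℂ}
    (hA : A.PosSemidef) (hB : B.PosSemidef) : 0 ≤ (A * B).trace := by
  open scoped MatrixOrder Matrix.Norms.L2Operator in
  obtain ⟨C, rfl⟩ := CStarAlgebra.nonneg_iff_eq_star_mul_self.mp hA.nonneg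
  rw [star_eq_conjTranspose, ← Matrix.trace_mul_cycle]
  exact psd_trace_nonneg (hB.mul_mul_conjTranspose_same C)

lemma trace_re_le_one {ρ C : Matrix (Fin d) (Fin d) ℂ} (hρ : ρ.PosSemidef)
    (hρ1 : ρ.trace = 1) (hC : C.IsHermitian) (hC2 : C * C = 1) :
    ((ρ * C).trace).re ≤ 1 := by
  have h1 : (1 - C)ᴴ = 1 - C := by
    rw [conjTranspose_sub, conjTranspose_one, hC.eq]
  have h2 : (1 - C)ᴴ * (1 - C) = (2:ℂ) • (1 - C) := by
    rw [h1, sub_mul, mul_sub, mul_sub, hC2]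
    simp only [mul_one, one_mul, two_smul]
    abel
  have hQ : (1 - C).PosSemidef := by
    refine .of_dotProduct_mulVec_nonneg h1 fun x => ?_
    have h4 := (Matrix.posSemidef_conjTranspose_mul_self (1 - C)).dotProduct_mulVec_nonneg x
    rw [h2, Matrix.smul_mulVec, dotProduct_smul, smul_eq_mul] at h4
    rw [Complex.le_def] at h4 ⊢
    obtain ⟨h4a, h4b⟩ := h4
    simp only [Complex.zero_re, Complex.zero_im, Complex.mul_re, Complex.mul_im,
      Complex.re_ofNat, Complex.im_ofNat] at h4a h4b
    exact ⟨by simp only [Complex.zero_re]; linarith,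
      by simp only [Complex.zero_im]; linarith⟩
  have h5 : 0 ≤ (ρ * (1 - C)).trace := trace_mul_psd_nonneg hρ hQ
  rw [mul_sub, mul_one, Matrix.trace_sub, hρ1, Complex.le_def] at h5
  have := h5.1
  simp only [Complex.zero_re, Complex.sub_re, Complex.one_re] at this
  linarith

lemma abs_trace_re_le_one {ρ C : Matrix (Fin d) (Fin d) ℂ} (hρ : ρ.PosSemidef)
    (hρ1 : ρ.trace = 1) (hC : C.IsHermitian) (hC2 : C * C = 1) :
    |((ρ * C).trace).re| ≤ 1 := by
  rw [abs_le]
  refine ⟨?_, trace_re_le_one hρ hρ1 hC hC2⟩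
  have hC' : (-C).IsHermitian := hC.neg
  have hC2' : (-C) * (-C) = 1 := by rw [neg_mul_neg, hC2]
  have := trace_re_le_one hρ hρ1 hC' hC2'
  rw [mul_neg, Matrix.trace_neg, Complex.neg_re] at this
  linarith


lemma pair_bound {ρ A B : Matrix (Fin d) (Fin d) ℂ} (hρ : ρ.PosSemidef)
    (hρ1 : ρ.trace = 1) (hA : A.IsHermitian) (hB : B.IsHermitian)
    (hA2 : A * A = 1) (hB2 : B * B = 1) (hAB : A * B = -(B * A)) :
    ((ρ * A).trace).re ^ 2 + ((ρ * B).trace).re ^ 2 ≤ 1 := by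
  set x := ((ρ * A).trace).re
  set y := ((ρ * B).trace).re
  have hanti : A * B + B * A = 0 := by rw [hAB]; exact neg_add_cancel _
  have key : ∀ a b : ℝ, a ^ 2 + b ^ 2 = 1 → a * x + b * y ≤ 1 := by
    intro a b hab
    set C := (a:ℂ) • A + (b:ℂ) • B with hCdef
    have hCh : C.IsHermitian := by
      show Cᴴ = C
      rw [hCdef, conjTranspose_add, conjTranspose_smul, conjTranspose_smul,
        hA.eq, hB.eq]
      simp [Complex.star_def, Complex.conj_ofReal]
    have hcast : ((a:ℂ) ^ 2 + (b:ℂ) ^ 2) = ((a ^ 2 + b ^ 2 : ℝ) : ℂ) := by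
      push_cast; ring
    have hC2 : C * C = 1 := by
      have expand : C * C = ((a:ℂ) ^ 2 + (b:ℂ) ^ 2) • (1 : Matrix (Fin d) (Fin d) ℂ)
          + ((a:ℂ) * (b:ℂ)) • (A * B + B * A) := by
        simp only [hCdef, add_mul, mul_add, smul_mul_assoc, mul_smul_comm, smul_smul,
          hA2, hB2, smul_add, add_smul]
        module
      rw [expand, hanti, smul_zero, add_zero, hcast, hab, Complex.ofReal_one, one_smul]
    have h1 := trace_re_le_one hρ hρ1 hCh hC2
    have htr : (ρ * C).trace = (a:ℂ) * (ρ * A).trace + (b:ℂ) * (ρ * B).trace := by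
      simp only [hCdef, mul_add, Matrix.mul_smul, Matrix.trace_add, Matrix.trace_smul,
        smul_eq_mul]
    rw [htr] at h1
    simpa [Complex.add_re, Complex.re_ofReal_mul] using h1
  by_cases h : x ^ 2 + y ^ 2 ≤ 1
  · exact h
  push_neg at h
  set r := Real.sqrt (x ^ 2 + y ^ 2) with hr
  have hr2 : r ^ 2 = x ^ 2 + y ^ 2 := Real.sq_sqrt (by positivity)
  have hr1 : 1 < r := by nlinarith [Real.sqrt_nonneg (x ^ 2 + y ^ 2)]
  have hrpos : 0 < r := lt_trans one_pos hr1
  have hk := key (x / r) (y / r) (by field_simp; linarith [hr2])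
  rw [div_mul_eq_mul_div, div_mul_eq_mul_div, ← add_div,
    div_le_one hrpos] at hk
  nlinarith


lemma exists_eigvec {V : Type*} [Fintype V] (G : SimpleGraph V) (hd : 1 ≤ d)
    (S : V → Matrix (Fin d) (Fin d) ℂ) (hS : IsRealization G d S) (I : Finset V) :
    IsIndepSet G I → ∃ ψ : Fin d → ℂ, star ψ ⬝ᵥ ψ = 1 ∧
      ∀ i ∈ I, S i *ᵥ ψ = ψ ∨ S i *ᵥ ψ = -ψ := by
  classical
  induction I using Finset.induction_on with
  | empty =>
    intro _
    refine ⟨Pi.single ⟨0, hd⟩ 1, ?_, by simp⟩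
    simp [dotProduct, Pi.single_apply, apply_ite, Finset.sum_ite_eq']
  | @insert j I hj ih =>
    intro hI
    obtain ⟨ψ, hψ1, hψ2⟩ := ih (fun a ha b hb =>
      hI a (Finset.mem_insert_of_mem ha) b (Finset.mem_insert_of_mem hb))
    have hψ0 : ψ ≠ 0 := by
      intro h; rw [h] at hψ1; simp at hψ1
    have hcomm : ∀ i ∈ I, S i * S j = S j * S i := by
      intro i hi
      refine hS.2.2.2 i j (fun h => hj (h ▸ hi)) ?_
      exact hI i (Finset.mem_insert_of_mem hi) j (Finset.mem_insert_self j I)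
    -- the two candidate eigenvectors
    have hjj : S j *ᵥ (S j *ᵥ ψ) = ψ := by
      rw [Matrix.mulVec_mulVec, hS.2.1 j, Matrix.one_mulVec]
    have hic : ∀ i ∈ I, S i *ᵥ (S j *ᵥ ψ) = S j *ᵥ (S i *ᵥ ψ) := by
      intro i hi
      rw [Matrix.mulVec_mulVec, Matrix.mulVec_mulVec, hcomm i hi]
    have hkey : ∃ φ : Fin d → ℂ, φ ≠ 0 ∧ (S j *ᵥ φ = φ ∨ S j *ᵥ φ = -φ) ∧
        ∀ i ∈ I, S i *ᵥ φ = φ ∨ S i *ᵥ φ = -φ := by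
      by_cases hp : ψ + S j *ᵥ ψ = 0
      · -- then S j ψ = -ψ, take φ = ψ
        refine ⟨ψ, hψ0, Or.inr ?_, hψ2⟩
        have : S j *ᵥ ψ = -ψ := by
          have := hp; linear_combination (norm := module) this
        exact this
      · refine ⟨ψ + S j *ᵥ ψ, hp, Or.inl ?_, ?_⟩
        · rw [Matrix.mulVec_add, hjj]; abel
        · intro i hi
          rcases hψ2 i hi with h | h
          · left; rw [Matrix.mulVec_add, hic i hi, h]
          · right; rw [Matrix.mulVec_add, hic i hi, h, Matrix.mulVec_neg]
            abel
    obtain ⟨φ, hφ0, hφj, hφI⟩ := hkey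
    -- normalize
    set n : ℝ := ∑ i, Complex.normSq (φ i) with hn
    have hnpos : 0 < n := by
      rw [hn]
      have : ∃ i, φ i ≠ 0 := by
        by_contra h; push_neg at h; exact hφ0 (funext h)
      obtain ⟨i0, hi0⟩ := this
      exact Finset.sum_pos' (fun i _ => Complex.normSq_nonneg _)
        ⟨i0, Finset.mem_univ i0, Complex.normSq_pos.mpr hi0⟩
    have hdot : star φ ⬝ᵥ φ = (n : ℂ) := by
      rw [hn]
      push_cast
      simp only [dotProduct, Pi.star_apply]
      exact Finset.sum_congr rfl fun i _ => by
        rw [Complex.star_def, ← Complex.normSq_eq_conj_mul_self]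
    set c : ℝ := (Real.sqrt n)⁻¹ with hc
    have hsq : (Real.sqrt n) ^ 2 = n := Real.sq_sqrt hnpos.le
    have hsqpos : 0 < Real.sqrt n := Real.sqrt_pos.mpr hnpos
    refine ⟨(c : ℂ) • φ, ?_, ?_⟩
    · have hr : c * (c * n) = 1 := by
        rw [hc]; field_simp; exact hsq.symm
      rw [star_smul, smul_dotProduct, dotProduct_smul, hdot]
      simp only [smul_eq_mul, Complex.star_def, Complex.conj_ofReal]
      rw [← Complex.ofReal_mul, ← Complex.ofReal_mul, hr, Complex.ofReal_one]
    · intro i hi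
      have hact : S i *ᵥ φ = φ ∨ S i *ᵥ φ = -φ := by
        rcases Finset.mem_insert.mp hi with rfl | hi'
        · exact hφj
        · exact hφI i hi'
      rcases hact with h | h
      · left; rw [Matrix.mulVec_smul, h]
      · right; rw [Matrix.mulVec_smul, h]; simp

lemma outer_density (ψ : Fin d → ℂ) (hψ : star ψ ⬝ᵥ ψ = 1) :
    ∃ ρ : Matrix (Fin d) (Fin d) ℂ, ρ.PosSemidef ∧ ρ.trace = 1 ∧
      ∀ A : Matrix (Fin d) (Fin d) ℂ, (ρ * A).trace = star ψ ⬝ᵥ (A *ᵥ ψ) := by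
  refine ⟨Matrix.of fun i j => ψ i * star (ψ j), .of_dotProduct_mulVec_nonneg ?_ ?_, ?_, ?_⟩
  · ext i j
    simp only [conjTranspose_apply, Matrix.of_apply, star_mul', star_star]
    exact mul_comm _ _
  · intro x
    have hmv : (Matrix.of fun i j => ψ i * star (ψ j)) *ᵥ x = (star ψ ⬝ᵥ x) • ψ := by
      funext i
      simp only [Matrix.mulVec, dotProduct, Matrix.of_apply, Pi.smul_apply,
        smul_eq_mul, Pi.star_apply]
      rw [Finset.sum_mul]
      exact Finset.sum_congr rfl fun j _ => by ring
    rw [hmv, dotProduct_smul, smul_eq_mul]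
    have hsx : star x ⬝ᵥ ψ = star (star ψ ⬝ᵥ x) := by
      simp only [dotProduct, Pi.star_apply, star_sum, star_mul', star_star]
      exact Finset.sum_congr rfl fun i _ => mul_comm _ _
    rw [hsx, Complex.star_def, Complex.mul_conj]
    rw [Complex.le_def]
    constructor
    · simp [Complex.normSq_nonneg]
    · simp
  · rw [Matrix.trace]
    have : ∀ i, (Matrix.of fun i j => ψ i * star (ψ j)).diag i = star (ψ i) * ψ i := by
      intro i; simp [Matrix.diag, mul_comm]
    rw [Fintype.sum_congr _ _ this]
    exact hψ
  · intro A
    simp only [Matrix.trace, Matrix.diag, Matrix.mul_apply, Matrix.of_apply,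
      Matrix.mulVec, dotProduct, Pi.star_apply, Finset.mul_sum]
    rw [Finset.sum_comm]
    exact Finset.sum_congr rfl fun b _ => Finset.sum_congr rfl fun i _ => by ring


end Stmt13Aux

open Stmt13Aux Filter in
/-- The generalized beta numbers β(G,w,k), defined as suprema over density matrices of the
weighted sums of k-th powers of absolute expectations, converge to the weighted independence
number α(G,w) as k → ∞. -/
theorem stmt_13 {V : Type*} [Fintype V] (G : SimpleGraph V) (d : ℕ) (hd : 1 ≤ d)
    (S : V → Matrix (Fin d) (Fin d) ℂ) (hS : IsRealization G d S)
    (w : V → ℝ) (hw : ∀ i, 0 ≤ w i) :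
    Filter.Tendsto (fun k : ℕ => sSup {r : ℝ | ∃ ρ : Matrix (Fin d) (Fin d) ℂ,
        ρ.PosSemidef ∧ ρ.trace = 1 ∧ r = ∑ i, w i * |((ρ * S i).trace).re| ^ k})
      Filter.atTop (nhds (alphaW G w)) := by
  classical
  obtain ⟨hHerm, hInv, hAdj, hNadj⟩ := id hS
  set α := alphaW G w with hα
  set W := ∑ i, w i with hW
  have hW0 : 0 ≤ W := Finset.sum_nonneg fun i _ => hw i
  have hαne : {r : ℝ | ∃ I : Finset V, IsIndepSet G I ∧ r = ∑ i ∈ I, w i}.Nonempty :=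
    ⟨0, ∅, fun a ha => absurd ha (Finset.notMem_empty a), by simp⟩
  have hαbdd : ∀ r ∈ {r : ℝ | ∃ I : Finset V, IsIndepSet G I ∧ r = ∑ i ∈ I, w i}, r ≤ W := by
    rintro r ⟨I, hI, rfl⟩
    exact Finset.sum_le_sum_of_subset_of_nonneg (Finset.subset_univ I) fun i _ _ => hw i
  have hαmem : ∀ I : Finset V, IsIndepSet G I → (∑ i ∈ I, w i) ≤ α := fun I hI =>
    le_csSup ⟨W, fun r hr => hαbdd r hr⟩ ⟨I, hI, rfl⟩
  have hα0 : 0 ≤ α := by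
    have := hαmem ∅ (fun a ha => absurd ha (Finset.notMem_empty a))
    simpa using this
  set t : ℝ := (Real.sqrt 2)⁻¹ with ht
  have hsqrt2 : 1 < Real.sqrt 2 := by
    nlinarith [Real.sq_sqrt (by norm_num : (0:ℝ) ≤ 2), Real.sqrt_nonneg 2]
  have ht0 : 0 ≤ t := by positivity
  have ht1 : t < 1 := by
    rw [ht]
    exact inv_lt_one_of_one_lt₀ hsqrt2
  have ht2 : t ^ 2 = 2⁻¹ := by
    rw [ht, inv_pow, Real.sq_sqrt (by norm_num : (0:ℝ) ≤ 2)]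
  -- upper estimate
  have hub : ∀ (k : ℕ) (ρ : Matrix (Fin d) (Fin d) ℂ), ρ.PosSemidef → ρ.trace = 1 →
      (∑ i, w i * |((ρ * S i).trace).re| ^ k) ≤ α + W * t ^ k := by
    intro k ρ hρ h1
    set x : V → ℝ := fun i => ((ρ * S i).trace).re with hx
    have hx1 : ∀ i, |x i| ≤ 1 := fun i => abs_trace_re_le_one hρ h1 (hHerm i) (hInv i)
    set I : Finset V := Finset.univ.filter (fun i => t < |x i|) with hI
    have hIindep : IsIndepSet G I := by
      intro a ha b hb hadj
      have hab := pair_bound hρ h1 (hHerm a) (hHerm b) (hInv a) (hInv b) (hAdj a b hadj)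
      have ha' : t < |x a| := (Finset.mem_filter.mp ha).2
      have hb' : t < |x b| := (Finset.mem_filter.mp hb).2
      have h2a : t ^ 2 < x a ^ 2 := by
        rw [← sq_abs (x a)]; exact pow_lt_pow_left₀ ha' ht0 (by norm_num)
      have h2b : t ^ 2 < x b ^ 2 := by
        rw [← sq_abs (x b)]; exact pow_lt_pow_left₀ hb' ht0 (by norm_num)
      rw [ht2] at h2a h2b
      norm_num at h2a h2b
      linarith
    have hsplit := Finset.sum_filter_add_sum_filter_not Finset.univ
      (fun i => t < |x i|) (fun i => w i * |x i| ^ k)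
    calc (∑ i, w i * |x i| ^ k)
        = (∑ i ∈ I, w i * |x i| ^ k)
          + ∑ i ∈ Finset.univ.filter (fun i => ¬ t < |x i|), w i * |x i| ^ k := hsplit.symm
      _ ≤ (∑ i ∈ I, w i)
          + ∑ i ∈ Finset.univ.filter (fun i => ¬ t < |x i|), w i * t ^ k := by
          refine add_le_add (Finset.sum_le_sum fun i hi => ?_)
            (Finset.sum_le_sum fun i hi => ?_)
          · have h2 : |x i| ^ k ≤ 1 := pow_le_one₀ (abs_nonneg _) (hx1 i)
            calc w i * |x i| ^ k ≤ w i * 1 := mul_le_mul_of_nonneg_left h2 (hw i)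
              _ = w i := mul_one _
          · have hle : |x i| ≤ t := not_lt.mp (Finset.mem_filter.mp hi).2
            exact mul_le_mul_of_nonneg_left
              (pow_le_pow_left₀ (abs_nonneg _) hle k) (hw i)
      _ ≤ α + W * t ^ k := by
          refine add_le_add (hαmem I hIindep) ?_
          rw [← Finset.sum_mul]
          refine mul_le_mul_of_nonneg_right ?_ (pow_nonneg ht0 k)
          rw [hW]
          exact Finset.sum_le_sum_of_subset_of_nonneg (Finset.subset_univ _)
            fun i _ _ => hw i
  -- lower elements
  have hlb : ∀ (k : ℕ) (I : Finset V), IsIndepSet G I →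
      ∃ r ∈ {r : ℝ | ∃ ρ : Matrix (Fin d) (Fin d) ℂ,
        ρ.PosSemidef ∧ ρ.trace = 1 ∧ r = ∑ i, w i * |((ρ * S i).trace).re| ^ k},
        (∑ i ∈ I, w i) ≤ r := by
    intro k I hI
    obtain ⟨ψ, hψ1, hψ2⟩ := exists_eigvec G hd S hS I hI
    obtain ⟨ρ, hρ, hρ1, hρtr⟩ := outer_density ψ hψ1
    refine ⟨∑ i, w i * |((ρ * S i).trace).re| ^ k, ⟨ρ, hρ, hρ1, rfl⟩, ?_⟩
    have hxI : ∀ i ∈ I, |((ρ * S i).trace).re| = 1 := by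
      intro i hi
      rw [hρtr (S i)]
      rcases hψ2 i hi with h | h
      · rw [h, hψ1]; norm_num
      · rw [h, dotProduct_neg, hψ1]; norm_num
    calc (∑ i ∈ I, w i) = ∑ i ∈ I, w i * |((ρ * S i).trace).re| ^ k :=
          Finset.sum_congr rfl fun i hi => by rw [hxI i hi, one_pow, mul_one]
      _ ≤ ∑ i, w i * |((ρ * S i).trace).re| ^ k :=
          Finset.sum_le_sum_of_subset_of_nonneg (Finset.subset_univ I)
            fun i _ _ => mul_nonneg (hw i) (pow_nonneg (abs_nonneg _) _)
  have hbdd : ∀ k : ℕ, BddAbove {r : ℝ | ∃ ρ : Matrix (Fin d) (Fin d) ℂ,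
      ρ.PosSemidef ∧ ρ.trace = 1 ∧ r = ∑ i, w i * |((ρ * S i).trace).re| ^ k} := by
    intro k
    refine ⟨α + W * t ^ k, ?_⟩
    rintro r ⟨ρ, hρ, h1, rfl⟩
    exact hub k ρ hρ h1
  have hlow : ∀ k : ℕ, α ≤ sSup {r : ℝ | ∃ ρ : Matrix (Fin d) (Fin d) ℂ,
      ρ.PosSemidef ∧ ρ.trace = 1 ∧ r = ∑ i, w i * |((ρ * S i).trace).re| ^ k} := by
    intro k
    rw [hα]
    show sSup _ ≤ _
    refine csSup_le hαne ?_
    rintro r ⟨I, hI, rfl⟩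
    obtain ⟨r', hr', hle⟩ := hlb k I hI
    exact le_trans hle (le_csSup (hbdd k) hr')
  have hhigh : ∀ k : ℕ, sSup {r : ℝ | ∃ ρ : Matrix (Fin d) (Fin d) ℂ,
      ρ.PosSemidef ∧ ρ.trace = 1 ∧ r = ∑ i, w i * |((ρ * S i).trace).re| ^ k}
      ≤ α + W * t ^ k := by
    intro k
    refine Real.sSup_le ?_ (by positivity)
    rintro r ⟨ρ, hρ, h1, rfl⟩
    exact hub k ρ hρ h1
  have htend : Tendsto (fun k : ℕ => α + W * t ^ k) atTop (nhds α) := by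
    have h0 : Tendsto (fun k : ℕ => t ^ k) atTop (nhds 0) :=
      tendsto_pow_atTop_nhds_zero_of_lt_one ht0 ht1
    have := (h0.const_mul W).const_add α
    simpa using this
  exact tendsto_of_tendsto_of_tendsto_of_le_of_le tendsto_const_nhds htend hlow hhigh
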